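/- Let B be the v×v adjacency matrix of an SRG(v,k,λ,μ) with μ = k/2 and k > 0. Suppose for a positive integer m and some β > 0 the n×n block matrix G = [[1, β𝟏ᵀ],[β𝟏, 2βB + (β+1)I − βJ]], where n = v+1, satisfies G² = (n/m)·G. Then necessarily m = ((v+1)/2)·(1 + (v−2k−1)/sqrt((v−2k−1)²+4v)) and β = sqrt((n−m)/(m(n−1))); in particular, a given such SRG determines the dimension m of the associated real ETF uniquely. -/
import Mathlib


open Matrix

/-- The `v × v` all-ones matrix `J`. -/
def allOnes (v : ℕ) : Matrix (Fin v) (Fin v) ℝ := Matrix.of fun _ _ => 1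

/-- The `(v+1) × (v+1)` block matrix `[[1, β𝟏ᵀ], [β𝟏, 2βB + (β+1)I - βJ]]`. -/
def blockGram (v : ℕ) (B : Matrix (Fin v) (Fin v) ℝ) (β : ℝ) :
    Matrix (Fin (v + 1)) (Fin (v + 1)) ℝ :=
  Matrix.of fun i j =>
    if hi : i = 0 then (if j = 0 then 1 else β)
    else if hj : j = 0 then β
    else 2 * β * B (i.pred hi) (j.pred hj) + (β + 1) * (if i = j then 1 else 0) - β

lemma bg00 (v : ℕ) (B : Matrix (Fin v) (Fin v) ℝ) (β : ℝ) :
    blockGram v B β 0 0 = 1 := by simp [blockGram]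

lemma bg0s (v : ℕ) (B : Matrix (Fin v) (Fin v) ℝ) (β : ℝ) (i : Fin v) :
    blockGram v B β 0 i.succ = β := by
  simp [blockGram, (Fin.succ_ne_zero i)]

lemma bgs0 (v : ℕ) (B : Matrix (Fin v) (Fin v) ℝ) (β : ℝ) (i : Fin v) :
    blockGram v B β i.succ 0 = β := by
  simp [blockGram, (Fin.succ_ne_zero i)]

lemma bgss (v : ℕ) (B : Matrix (Fin v) (Fin v) ℝ) (β : ℝ) (i j : Fin v) :
    blockGram v B β i.succ j.succ
    = 2 * β * B i j + (β + 1) * (if i = j then 1 else 0) - β := by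
  simp [blockGram, (Fin.succ_ne_zero i), (Fin.succ_ne_zero j), Fin.succ_inj]

/-- **Uniqueness of the ETF dimension.** Let `B` be the adjacency matrix of an
`SRG(v,k,λ,μ)` with `μ = k/2` and `k > 0`.  If for a positive integer `m` and some
`β > 0` the block matrix `G = [[1, β𝟏ᵀ], [β𝟏, 2βB + (β+1)I - βJ]]` satisfies
`G² = (n/m)·G` with `n = v+1`, then necessarily
`m = ((v+1)/2)(1 + (v-2k-1)/√((v-2k-1)²+4v))` and `β = √((n-m)/(m(n-1)))`;
in particular, such an SRG determines the ETF dimension `m` uniquely. -/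
theorem srg_determines_etf_dimension (v : ℕ) (hv : 0 < v)
    (B : Matrix (Fin v) (Fin v) ℝ) (k l : ℝ) (hk : 0 < k)
    (hsym : B.IsSymm)
    (h01 : ∀ i j, B i j = 0 ∨ B i j = 1)
    (hdiag : ∀ i, B i i = 0)
    (hsrg : B * B = (l - k / 2) • B + (k - k / 2) • 1 + (k / 2) • allOnes v)
    (m : ℕ) (hm : 0 < m) (β : ℝ) (hβ : 0 < β)
    (hGram : blockGram v B β * blockGram v B β
      = ((((v : ℝ) + 1)) / (m : ℝ)) • blockGram v B β) :
    (m : ℝ) = (((v : ℝ) + 1) / 2)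
        * (1 + ((v : ℝ) - 2 * k - 1) / Real.sqrt (((v : ℝ) - 2 * k - 1) ^ 2 + 4 * v)) ∧
      β = Real.sqrt (((((v : ℝ) + 1)) - m) / ((m : ℝ) * (((v : ℝ) + 1) - 1))) := by
  have hv' : (0:ℝ) < v := by exact_mod_cast hv
  have hm' : (0:ℝ) < m := by exact_mod_cast hm
  -- column sums of B equal k
  have hcol : ∀ j : Fin v, ∑ i, B i j = k := by
    intro j
    have h1 : (B * B) j j = k := by
      rw [hsrg]
      simp [allOnes, hdiag j, Matrix.add_apply, Matrix.smul_apply, Matrix.one_apply]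
    have h2 : (B * B) j j = ∑ i, B i j := by
      rw [Matrix.mul_apply]
      refine Finset.sum_congr rfl fun i _ => ?_
      have hs := congrFun (congrFun hsym i) j
      rw [Matrix.transpose_apply] at hs
      rcases h01 i j with h | h <;> simp [hs, h]
    rw [← h2, h1]
  -- equation from entry (0,0)
  have eA := Matrix.ext_iff.mpr hGram 0 0
  rw [Matrix.mul_apply, Matrix.smul_apply, smul_eq_mul, Fin.sum_univ_succ] at eA
  simp only [bg00, bg0s, bgs0, Finset.sum_const, Finset.card_univ,
    Fintype.card_fin, nsmul_eq_mul, one_mul, mul_one] at eA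
  -- eA : 1 + ↑v * (β * β) = (↑v + 1) / ↑m
  -- equation from entry (0, j0.succ)
  set j0 : Fin v := ⟨0, hv⟩ with hj0
  have eB := Matrix.ext_iff.mpr hGram 0 j0.succ
  rw [Matrix.mul_apply, Matrix.smul_apply, smul_eq_mul, Fin.sum_univ_succ] at eB
  simp only [bg00, bg0s, bgs0, bgss, one_mul] at eB
  have hsplit : ∀ i : Fin v,
      β * (2 * β * B i j0 + (β + 1) * (if i = j0 then 1 else 0) - β)
      = (2 * β * β) * B i j0 + (β * (β + 1)) * (if i = j0 then 1 else 0) - β * β :=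
    fun i => by ring
  have hite : ∑ i : Fin v, (if i = j0 then (1:ℝ) else 0) = 1 := by simp
  rw [Finset.sum_congr rfl (fun i _ => hsplit i), Finset.sum_sub_distrib,
    Finset.sum_add_distrib, ← Finset.mul_sum, ← Finset.mul_sum, hcol j0, hite] at eB
  simp only [Finset.sum_const, Finset.card_univ, Fintype.card_fin,
    nsmul_eq_mul, mul_one] at eB
  -- eB : β + (2*β*β*k + β*(β+1) - v*(β*β)) = (v+1)/m * β
  -- the quadratic satisfied by β
  have hQ : (v:ℝ) * β^2 + ((v:ℝ) - 2*k - 1) * β - 1 = 0 := by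
    have hQ' : β * ((v:ℝ) * β^2 + ((v:ℝ) - 2*k - 1) * β - 1) = β * 0 := by
      rw [mul_zero]; linear_combination β * eA - eB
    exact mul_left_cancel₀ hβ.ne' hQ'
  set c : ℝ := (v:ℝ) - 2*k - 1 with hc
  set s : ℝ := Real.sqrt (c^2 + 4*v) with hsdef
  have hs2 : s^2 = c^2 + 4*v := Real.sq_sqrt (by positivity)
  have hspos : 0 < s := Real.sqrt_pos.mpr (by positivity)
  -- β is the positive root
  have hfac : (2*(v:ℝ)*β + c - s) * (2*(v:ℝ)*β + c + s) = 0 := by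
    linear_combination 4*(v:ℝ)*hQ - hs2
  have h2v : 2*(v:ℝ)*β = s - c := by
    rcases mul_eq_zero.mp hfac with h | h
    · linarith
    · exfalso
      have h3 : β * (2*(v:ℝ)*β + c + s) = 0 := by rw [h, mul_zero]
      nlinarith [mul_pos hβ hspos, mul_pos hv' (mul_pos hβ hβ)]
  -- rearranged entry-(0,0) equation
  have eA' : (1 + (v:ℝ) * (β*β)) * m = (v:ℝ) + 1 := by
    rw [eq_div_iff hm'.ne'] at eA; exact eA
  constructor
  · -- the formula for m
    have hkey : (m:ℝ) * (s*(s-c)) = ((v:ℝ)+1) * (2*v) := by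
      have hone : (1 + (v:ℝ) * (β*β)) * (4*(v:ℝ)) = s*(s-c) * 2 := by
        linear_combination (2*(v:ℝ)*β + s - c)*h2v - hs2
      linear_combination 2*(v:ℝ)*eA' - ((m:ℝ)*hone)/2
    have hrw : (((v:ℝ)+1)/2) * (1 + c/s) = ((v:ℝ)+1)*(s+c)/(2*s) := by
      field_simp
    rw [hrw, eq_div_iff (by positivity)]
    have hx : (4*(v:ℝ)) * ((m:ℝ)*(2*s)) = (4*(v:ℝ)) * (((v:ℝ)+1)*(s+c)) := by
      linear_combination 2*(s+c)*hkey - 2*(m:ℝ)*s*hs2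
    have := mul_left_cancel₀ (by positivity : (4*(v:ℝ)) ≠ 0) hx
    linarith
  · -- the formula for β
    have hne : (m:ℝ) * (((v:ℝ)+1) - 1) ≠ 0 := by
      have hx : ((v:ℝ)+1) - 1 = (v:ℝ) := by ring
      rw [hx]; positivity
    have harg : ((((v:ℝ)+1) - m) / ((m:ℝ) * (((v:ℝ)+1) - 1))) = β^2 := by
      rw [div_eq_iff hne]
      linear_combination -eA'
    rw [harg, Real.sqrt_sq hβ.le]
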